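/- Let ε ∈ (0,1), δ > 0, β₀ > 0 satisfy 0 < 2β₀^{1−ε} < δ(1−ε), and set T₀ = ½ ln(δ(1−ε)/(δ(1−ε) − 2β₀^{1−ε})) ∈ (0, ∞). Define β : [0, T₀) → ℝ by β(t) = (δ(1−ε)/2 · (e^{−2t} − 1) + β₀^{1−ε})^{1/(1−ε)}. Then β is positive on [0,T₀), solves the ODE β'(t) = −δ e^{−2t} β(t)^ε with β(0) = β₀, β(t) → 0 as t → T₀⁻, and consequently 2/(e^t β(t)) → +∞ as t → T₀⁻. -/

import Mathlib

open Set Real Filter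

noncomputable section

/-- The blow-up time `T₀ = ½ ln(δ(1−ε)/(δ(1−ε) − 2β₀^{1−ε}))`. -/
def blowupTime (ε δ β₀ : ℝ) : ℝ :=
  (1 / 2) * Real.log (δ * (1 - ε) / (δ * (1 - ε) - 2 * β₀ ^ (1 - ε)))

/-- The solution `β(t) = (δ(1−ε)/2 (e^{−2t} − 1) + β₀^{1−ε})^{1/(1−ε)}` of the ODE
`β' = −δ e^{−2t} β^ε`, `β(0) = β₀`. -/
def betaFun (ε δ β₀ : ℝ) (t : ℝ) : ℝ :=
  (δ * (1 - ε) / 2 * (Real.exp (-2 * t) - 1) + β₀ ^ (1 - ε)) ^ (1 / (1 - ε))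

theorem stmt_12 (ε δ β₀ : ℝ) (hε : ε ∈ Ioo (0:ℝ) 1) (hδ : 0 < δ) (hβ₀ : 0 < β₀)
    (hcon : 2 * β₀ ^ (1 - ε) < δ * (1 - ε)) :
    0 < blowupTime ε δ β₀ ∧
    (∀ t ∈ Ico (0:ℝ) (blowupTime ε δ β₀), 0 < betaFun ε δ β₀ t) ∧
    betaFun ε δ β₀ 0 = β₀ ∧
    (∀ t ∈ Ico (0:ℝ) (blowupTime ε δ β₀),
      HasDerivAt (betaFun ε δ β₀) (-δ * Real.exp (-2 * t) * betaFun ε δ β₀ t ^ ε) t) ∧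
    Tendsto (betaFun ε δ β₀) (nhdsWithin (blowupTime ε δ β₀) (Iio (blowupTime ε δ β₀)))
      (nhds 0) ∧
    Tendsto (fun t => 2 / (Real.exp t * betaFun ε δ β₀ t))
      (nhdsWithin (blowupTime ε δ β₀) (Iio (blowupTime ε δ β₀))) atTop := by
  obtain ⟨hε0, hε1⟩ := hε
  set T := blowupTime ε δ β₀ with hTdef
  have h1ε : (0:ℝ) < 1 - ε := by linarith
  have hB : 0 < β₀ ^ (1 - ε) := Real.rpow_pos_of_pos hβ₀ _
  have hA : 0 < δ * (1 - ε) := by positivity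
  have hden : 0 < δ * (1 - ε) - 2 * β₀ ^ (1 - ε) := by linarith
  have hr1 : 1 < δ * (1 - ε) / (δ * (1 - ε) - 2 * β₀ ^ (1 - ε)) :=
    (one_lt_div hden).mpr (by linarith)
  have hTpos : 0 < T := mul_pos (by norm_num) (Real.log_pos hr1)
  -- exp(-2T)
  have hexpT : Real.exp (-2 * T) = (δ * (1 - ε) - 2 * β₀ ^ (1 - ε)) / (δ * (1 - ε)) := by
    have hTeq : -2 * T = -(Real.log (δ * (1 - ε) / (δ * (1 - ε) - 2 * β₀ ^ (1 - ε)))) := by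
      rw [hTdef, blowupTime]; ring
    rw [hTeq, Real.exp_neg, Real.exp_log (by positivity), inv_div]
  -- positivity of the inner function on Iio T
  have g_pos : ∀ t < T, 0 < δ * (1 - ε) / 2 * (Real.exp (-2 * t) - 1) + β₀ ^ (1 - ε) := by
    intro t ht
    have h1 : Real.exp (-2 * T) < Real.exp (-2 * t) := Real.exp_lt_exp.mpr (by linarith)
    rw [hexpT, div_lt_iff₀ hA] at h1
    nlinarith
  have hbpos : ∀ t < T, 0 < betaFun ε δ β₀ t := by
    intro t ht
    exact Real.rpow_pos_of_pos (g_pos t ht) _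
  -- inner function vanishes at T
  have g_T : δ * (1 - ε) / 2 * (Real.exp (-2 * T) - 1) + β₀ ^ (1 - ε) = 0 := by
    rw [hexpT]
    field_simp
    ring
  -- initial value
  have hinit : betaFun ε δ β₀ 0 = β₀ := by
    have h0 : δ * (1 - ε) / 2 * (Real.exp (-2 * 0) - 1) + β₀ ^ (1 - ε) = β₀ ^ (1 - ε) := by
      norm_num
    unfold betaFun
    rw [h0, ← Real.rpow_mul hβ₀.le,
      show (1 - ε) * (1 / (1 - ε)) = 1 by field_simp, Real.rpow_one]
  -- derivative
  have hderiv : ∀ t ∈ Ico (0:ℝ) T,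
      HasDerivAt (betaFun ε δ β₀) (-δ * Real.exp (-2 * t) * betaFun ε δ β₀ t ^ ε) t := by
    intro t ht
    have hg := g_pos t ht.2
    have hlin := (hasDerivAt_id t).const_mul (-2 : ℝ)
    rw [mul_one] at hlin
    have he : HasDerivAt (fun s : ℝ => Real.exp (-2 * s)) (Real.exp (-2 * t) * (-2)) t :=
      hlin.exp
    have hd : HasDerivAt
        (fun s => δ * (1 - ε) / 2 * (Real.exp (-2 * s) - 1) + β₀ ^ (1 - ε))
        (δ * (1 - ε) / 2 * (Real.exp (-2 * t) * (-2))) t :=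
      ((he.sub_const 1).const_mul _).add_const _
    have key := hd.rpow_const (p := 1 / (1 - ε)) (Or.inl hg.ne')
    have hq : 1 / (1 - ε) - 1 = 1 / (1 - ε) * ε := by field_simp; ring
    rw [hq] at key
    have hco : δ * (1 - ε) / 2 * (Real.exp (-2 * t) * (-2)) * (1 / (1 - ε)) =
        -δ * Real.exp (-2 * t) := by field_simp
    rw [hco] at key
    have hbe : (δ * (1 - ε) / 2 * (Real.exp (-2 * t) - 1) + β₀ ^ (1 - ε)) ^ (1 / (1 - ε) * ε) =
        betaFun ε δ β₀ t ^ ε := by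
      rw [Real.rpow_mul hg.le]; rfl
    rw [← hbe]
    exact key
  -- limit of betaFun
  have hlim : Tendsto (betaFun ε δ β₀) (nhdsWithin T (Iio T)) (nhds 0) := by
    have hgc : Tendsto (fun t => δ * (1 - ε) / 2 * (Real.exp (-2 * t) - 1) + β₀ ^ (1 - ε))
        (nhds T) (nhds 0) := by
      have : Continuous (fun t : ℝ => δ * (1 - ε) / 2 * (Real.exp (-2 * t) - 1) + β₀ ^ (1 - ε)) := by
        continuity
      have hct := (this.continuousAt (x := T)).tendsto
      rw [g_T] at hct
      exact hct
    have hrc : ContinuousAt (fun x : ℝ => x ^ (1 / (1 - ε))) 0 :=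
      Real.continuousAt_rpow_const 0 _ (Or.inr (by positivity))
    have : Tendsto (betaFun ε δ β₀) (nhds T) (nhds 0) := by
      have hcomp := hrc.tendsto.comp hgc
      rw [Real.zero_rpow (by positivity : (1:ℝ) / (1 - ε) ≠ 0)] at hcomp
      exact hcomp
    exact this.mono_left nhdsWithin_le_nhds
  refine ⟨hTpos, fun t ht => hbpos t ht.2, hinit, hderiv, hlim, ?_⟩
  -- final blow-up statement
  have hfl : Tendsto (fun t => Real.exp t * betaFun ε δ β₀ t)
      (nhdsWithin T (Iio T)) (nhdsWithin 0 (Ioi 0)) := by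
    rw [tendsto_nhdsWithin_iff]
    constructor
    · have hexp : Tendsto (fun t => Real.exp t) (nhdsWithin T (Iio T)) (nhds (Real.exp T)) :=
        (Real.continuous_exp.continuousAt.tendsto).mono_left nhdsWithin_le_nhds
      simpa using hexp.mul hlim
    · filter_upwards [self_mem_nhdsWithin] with t ht
      exact mul_pos (Real.exp_pos t) (hbpos t ht)
  have := hfl.inv_tendsto_nhdsGT_zero
  have h2 : Tendsto (fun t => 2 * (Real.exp t * betaFun ε δ β₀ t)⁻¹)
      (nhdsWithin T (Iio T)) atTop :=
    this.const_mul_atTop (by norm_num : (0:ℝ) < 2)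
  simpa [div_eq_mul_inv] using h2
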